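/- Let (X, A) be a t-(v,k,λ) design with no repeated blocks and let a_s ∈ {0,...,λ_s^t} for s ∈ [t−1] with Σ_s a_s·C(t,s) > λ_1. Then for every t-subset τ ⊆ X there exists a set ζ of Σ_s a_s·C(t,s) blocks of A such that the subarray of the incidence array P (rows = blocks, columns = points, entry * iff the point is in the block) restricted to rows ζ and columns τ has its stars in exactly the same positions as the stacked PDA B built from the a_s (rows indexed by (Y,i), Y ⊆ [t] of size s, i ∈ [a_s]; star at column j iff j ∈ Y under the natural bijection τ → [t]). -/

import Mathlib

/-- The row-index set of the stacked array B: triples (s, i, Y) with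
s ∈ [t−1], i ∈ [a_s], and Y an s-subset of [t]. -/
def stackedRows (t : ℕ) (a : ℕ → ℕ) : Finset (ℕ × ℕ × Finset (Fin t)) :=
  (Finset.Icc 1 (t - 1)).biUnion (fun s =>
    (Finset.Icc 1 (a s)).biUnion (fun i =>
      (Finset.univ.filter (fun Y : Finset (Fin t) => Y.card = s)).image
        (fun Y => (s, i, Y))))

lemma mem_stackedRows_aux {t : ℕ} {a : ℕ → ℕ} {r : ℕ × ℕ × Finset (Fin t)} :
    r ∈ stackedRows t a ↔
    (1 ≤ r.1 ∧ r.1 ≤ t - 1) ∧ (1 ≤ r.2.1 ∧ r.2.1 ≤ a r.1) ∧ r.2.2.card = r.1 := by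
  unfold stackedRows
  simp only [Finset.mem_biUnion, Finset.mem_Icc, Finset.mem_image, Finset.mem_filter,
    Finset.mem_univ, true_and]
  constructor
  · rintro ⟨s, hs, i, hi, Y, hY, rfl⟩
    exact ⟨hs, hi, hY⟩
  · rintro ⟨hs, hi, hY⟩
    exact ⟨r.1, hs, r.2.1, hi, r.2.2, hY, rfl⟩

lemma between_count {α : Type*} [DecidableEq α] (S b : Finset α) (hSb : S ⊆ b)
    (j : ℕ) (hj : S.card ≤ j) :
    ((b.powersetCard j).filter (fun T => S ⊆ T)).card
      = (b.card - S.card).choose (j - S.card) := by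
  rw [← Finset.card_sdiff_of_subset hSb, ← Finset.card_powersetCard]
  apply Finset.card_bij' (fun T _ => T \ S) (fun U _ => U ∪ S)
  · intro T hT
    simp only [Finset.mem_filter, Finset.mem_powersetCard] at hT ⊢
    obtain ⟨⟨hTb, hTc⟩, hST⟩ := hT
    refine ⟨fun x hx => ?_, ?_⟩
    · simp only [Finset.mem_sdiff] at hx ⊢; exact ⟨hTb hx.1, hx.2⟩
    · rw [Finset.card_sdiff_of_subset hST, hTc]
  · intro U hU
    simp only [Finset.mem_powersetCard] at hU
    obtain ⟨hUb, hUc⟩ := hU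
    have hdisj : Disjoint U S := by
      refine Finset.disjoint_left.2 fun x hx hxS => ?_
      exact (Finset.mem_sdiff.1 (hUb hx)).2 hxS
    simp only [Finset.mem_filter, Finset.mem_powersetCard]
    refine ⟨⟨?_, ?_⟩, ?_⟩
    · exact Finset.union_subset (hUb.trans Finset.sdiff_subset) hSb
    · rw [Finset.card_union_of_disjoint hdisj, hUc]
      omega
    · exact Finset.subset_union_right
  · intro T hT
    simp only [Finset.mem_filter] at hT
    exact Finset.sdiff_union_of_subset hT.2
  · intro U hU
    simp only [Finset.mem_powersetCard] at hU
    refine Finset.union_sdiff_cancel_right ?_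
    refine Finset.disjoint_left.2 fun x hx hxS => ?_
    exact (Finset.mem_sdiff.1 (hU.1 hx)).2 hxS

lemma contain_count (v k t lam : ℕ)
    (A : Finset (Finset (Fin v)))
    (hblocks : ∀ b ∈ A, b.card = k)
    (hdes : ∀ T : Finset (Fin v), T.card = t →
      (A.filter (fun b => T ⊆ b)).card = lam)
    (S : Finset (Fin v)) (hS : S.card ≤ t) :
    (A.filter (fun b => S ⊆ b)).card * (k - S.card).choose (t - S.card)
      = lam * (v - S.card).choose (t - S.card) := by
  set P := ((Finset.univ : Finset (Fin v)).powersetCard t) with hP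
  have key : ∑ b ∈ A, (P.filter (fun T => S ⊆ T ∧ T ⊆ b)).card
      = ∑ T ∈ P.filter (fun T => S ⊆ T), (A.filter (fun b => T ⊆ b)).card := by
    calc ∑ b ∈ A, (P.filter (fun T => S ⊆ T ∧ T ⊆ b)).card
        = ∑ b ∈ A, ∑ T ∈ P, if S ⊆ T ∧ T ⊆ b then 1 else 0 := by
          simp only [Finset.card_filter]
      _ = ∑ T ∈ P, ∑ b ∈ A, if S ⊆ T ∧ T ⊆ b then 1 else 0 := Finset.sum_comm
      _ = ∑ T ∈ P, if S ⊆ T then ∑ b ∈ A, (if T ⊆ b then 1 else 0) else 0 := by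
          refine Finset.sum_congr rfl fun T _ => ?_
          by_cases hST : S ⊆ T <;> simp [hST]
      _ = ∑ T ∈ P.filter (fun T => S ⊆ T), (A.filter (fun b => T ⊆ b)).card := by
          rw [Finset.sum_filter]
          simp only [Finset.card_filter]
  have lhs_eval : ∑ b ∈ A, (P.filter (fun T => S ⊆ T ∧ T ⊆ b)).card
      = (A.filter (fun b => S ⊆ b)).card * (k - S.card).choose (t - S.card) := by
    have hterm : ∀ b ∈ A, (P.filter (fun T => S ⊆ T ∧ T ⊆ b)).card
        = if S ⊆ b then (k - S.card).choose (t - S.card) else 0 := by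
      intro b hb
      have hset : P.filter (fun T => S ⊆ T ∧ T ⊆ b)
          = (b.powersetCard t).filter (fun T => S ⊆ T) := by
        ext T
        simp only [hP, Finset.mem_filter, Finset.mem_powersetCard, Finset.subset_univ,
          true_and]
        tauto
      rw [hset]
      by_cases hSb : S ⊆ b
      · rw [between_count S b hSb t hS, hblocks b hb, if_pos hSb]
      · rw [if_neg hSb, Finset.card_eq_zero]
        refine Finset.filter_eq_empty_iff.2 fun {T} hT hST => ?_
        exact hSb (hST.trans (Finset.mem_powersetCard.1 hT).1)
    rw [Finset.sum_congr rfl hterm, ← Finset.sum_filter, Finset.sum_const, smul_eq_mul]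
  have rhs_eval : ∑ T ∈ P.filter (fun T => S ⊆ T), (A.filter (fun b => T ⊆ b)).card
      = lam * (v - S.card).choose (t - S.card) := by
    have hcard : (P.filter (fun T => S ⊆ T)).card = (v - S.card).choose (t - S.card) := by
      have := between_count S (Finset.univ : Finset (Fin v)) (Finset.subset_univ S) t hS
      simpa using this
    rw [Finset.sum_congr rfl (fun T hT => hdes T
      (Finset.mem_powersetCard.1 (Finset.mem_filter.1 hT).1).2),
      Finset.sum_const, smul_eq_mul, hcard, mul_comm]
  rw [← lhs_eval, key, rhs_eval]

lemma exact_count (v k t lam : ℕ) (hkt : t ≤ k) (hkv : k ≤ v)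
    (A : Finset (Finset (Fin v)))
    (hblocks : ∀ b ∈ A, b.card = k)
    (hdes : ∀ T : Finset (Fin v), T.card = t →
      (A.filter (fun b => T ⊆ b)).card = lam)
    (τ : Finset (Fin v)) (hτ : τ.card = t)
    (S : Finset (Fin v)) (hSτ : S ⊆ τ) :
    (A.filter (fun b => b ∩ τ = S)).card * (v - t).choose (k - t)
      = lam * (v - t).choose (k - S.card) := by
  have hbase : ∀ S : Finset (Fin v), S ⊆ τ → t ≤ S.card →
      (A.filter (fun b => b ∩ τ = S)).card * (v - t).choose (k - t)
        = lam * (v - t).choose (k - S.card) := by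
    clear hSτ S
    intro S' hS't hcard
    have hSeq : S' = τ := Finset.eq_of_subset_of_card_le hS't (by omega)
    subst hSeq
    have : A.filter (fun b => b ∩ S' = S') = A.filter (fun b => S' ⊆ b) :=
      Finset.filter_congr fun b _ => by rw [Finset.inter_eq_right]
    rw [this, hdes S' hτ, hτ, mul_comm]
  have hmain : ∀ (n : ℕ) (S : Finset (Fin v)), S ⊆ τ → t - S.card ≤ n →
      (A.filter (fun b => b ∩ τ = S)).card * (v - t).choose (k - t)
        = lam * (v - t).choose (k - S.card) := by
    intro n
    induction n with
    | zero => exact fun S h1 h2 => hbase S h1 (by omega)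
    | succ n ih =>
      intro S hSτ hn
      have hsle : S.card ≤ t := hτ ▸ Finset.card_le_card hSτ
      by_cases hst : t ≤ S.card
      · exact hbase S hSτ hst
      push_neg at hst
      set s := S.card with hs
      set c := (v - t).choose (k - t) with hc
      set m := (k - s).choose (t - s) with hm
      set I := τ.powerset.filter (fun U => S ⊆ U) with hI
      have hSI : S ∈ I := by
        simp only [hI, Finset.mem_filter, Finset.mem_powerset]
        exact ⟨hSτ, Finset.Subset.refl S⟩
      have hpart : (A.filter (fun b => S ⊆ b)).card
          = ∑ U ∈ I, (A.filter (fun b => b ∩ τ = U)).card := by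
        have hmaps : ∀ b ∈ A.filter (fun b => S ⊆ b), b ∩ τ ∈ I := by
          intro b hb
          rw [Finset.mem_filter] at hb
          simp only [hI, Finset.mem_filter, Finset.mem_powerset]
          exact ⟨Finset.inter_subset_right, Finset.subset_inter hb.2 hSτ⟩
        rw [Finset.card_eq_sum_card_fiberwise hmaps]
        refine Finset.sum_congr rfl fun U hU => ?_
        congr 1
        rw [Finset.filter_filter]
        refine Finset.filter_congr fun b _ => ?_
        simp only [hI, Finset.mem_filter, Finset.mem_powerset] at hU
        constructor
        · exact fun h => h.2
        · intro h
          refine ⟨?_, h⟩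
          exact (hU.2.trans (h ▸ Finset.inter_subset_left))
      set R := ∑ U ∈ I.erase S, lam * (v - t).choose (k - U.card) with hR
      have hIH : ∀ U ∈ I.erase S,
          (A.filter (fun b => b ∩ τ = U)).card * c = lam * (v - t).choose (k - U.card) := by
        intro U hU
        rw [Finset.mem_erase] at hU
        obtain ⟨hUne, hUI⟩ := hU
        simp only [hI, Finset.mem_filter, Finset.mem_powerset] at hUI
        have hcardlt : s < U.card := Finset.card_lt_card (Finset.ssubset_iff_subset_ne.2
          ⟨hUI.2, Ne.symm hUne⟩)
        have hUt : U.card ≤ t := hτ ▸ Finset.card_le_card hUI.1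
        exact ih U hUI.1 (by omega)
      have h1 : (∑ U ∈ I, (A.filter (fun b => b ∩ τ = U)).card) * c
          = (A.filter (fun b => b ∩ τ = S)).card * c + R := by
        rw [Finset.sum_mul, ← Finset.add_sum_erase I _ hSI]
        congr 1
        exact Finset.sum_congr rfl hIH
      have hall : ∑ U ∈ I, lam * (v - t).choose (k - U.card)
          = lam * (v - s).choose (k - s) := by
        have hreindex : ∑ U ∈ I, lam * (v - t).choose (k - U.card)
            = ∑ W ∈ (τ \ S).powerset, lam * (v - t).choose (k - (s + W.card)) := by
          refine Finset.sum_nbij' (i := fun U => U \ S) (j := fun W => W ∪ S) ?_ ?_ ?_ ?_ ?_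
          · intro U hU
            simp only [hI, Finset.mem_filter, Finset.mem_powerset] at hU
            exact Finset.mem_powerset.2 (Finset.sdiff_subset_sdiff hU.1 (Finset.Subset.refl S))
          · intro W hW
            rw [Finset.mem_powerset] at hW
            simp only [hI, Finset.mem_filter, Finset.mem_powerset]
            exact ⟨Finset.union_subset (hW.trans Finset.sdiff_subset) hSτ,
              Finset.subset_union_right⟩
          · intro U hU
            simp only [hI, Finset.mem_filter, Finset.mem_powerset] at hU
            exact Finset.sdiff_union_of_subset hU.2
          · intro W hW
            rw [Finset.mem_powerset] at hW
            refine Finset.union_sdiff_cancel_right ?_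
            exact Finset.disjoint_left.2 fun x hx hxS =>
              (Finset.mem_sdiff.1 (hW hx)).2 hxS
          · intro U hU
            simp only [hI, Finset.mem_filter, Finset.mem_powerset] at hU
            congr 2
            rw [Finset.card_sdiff_of_subset hU.2]
            have := Finset.card_le_card hU.2
            omega
        rw [hreindex, Finset.sum_powerset_apply_card
          (fun j => lam * (v - t).choose (k - (s + j)))]
        have hts : (τ \ S).card = t - s := by rw [Finset.card_sdiff_of_subset hSτ, hτ]
        rw [hts]
        have hvan : (v - s).choose (k - s)
            = ∑ i ∈ Finset.range (k - s + 1), (t - s).choose i * (v - t).choose (k - s - i) := by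
          have hv : v - s = (t - s) + (v - t) := by omega
          rw [hv, Nat.add_choose_eq, Finset.Nat.sum_antidiagonal_eq_sum_range_succ_mk]
        rw [hvan, Finset.mul_sum]
        rw [← Finset.sum_subset (Finset.range_subset_range.2 (by omega : t - s + 1 ≤ k - s + 1))
          (fun i _ hi => by
            rw [Finset.mem_range, not_lt] at hi
            rw [Nat.choose_eq_zero_of_lt (by omega), zero_mul, mul_zero])]
        refine Finset.sum_congr rfl fun i hi => ?_
        rw [smul_eq_mul]
        have : k - (s + i) = k - s - i := by omega
        rw [this]
        ring
      have h2 : lam * (v - t).choose (k - s) + R = lam * (v - s).choose (k - s) := by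
        rw [← hall, ← Finset.add_sum_erase I _ hSI]
      have h3 : (A.filter (fun b => S ⊆ b)).card * m = lam * (v - s).choose (t - s) :=
        contain_count v k t lam A hblocks hdes S hsle
      have h4 : (v - s).choose (t - s) * c = m * (v - s).choose (k - s) := by
        have := Nat.choose_mul (n := v - s) (k := k - s) (s := t - s)
          (by omega)
        have e1 : v - s - (t - s) = v - t := by omega
        have e2 : k - s - (t - s) = k - t := by omega
        rw [e1, e2] at this
        rw [hc, hm, mul_comm m _, ← this, mul_comm]
      have hmpos : 0 < m := Nat.choose_pos (by omega)
      have key : ((A.filter (fun b => b ∩ τ = S)).card * c + R) * m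
          = (lam * (v - t).choose (k - s) + R) * m := by
        calc ((A.filter (fun b => b ∩ τ = S)).card * c + R) * m
            = ((∑ U ∈ I, (A.filter (fun b => b ∩ τ = U)).card) * c) * m := by rw [h1]
          _ = ((A.filter (fun b => S ⊆ b)).card * m) * c := by rw [hpart]; ring
          _ = (lam * (v - s).choose (t - s)) * c := by rw [h3]
          _ = lam * ((v - s).choose (t - s) * c) := by ring
          _ = lam * (m * (v - s).choose (k - s)) := by rw [h4]
          _ = (lam * (v - s).choose (k - s)) * m := by ring
          _ = (lam * (v - t).choose (k - s) + R) * m := by rw [h2]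
      have := Nat.eq_of_mul_eq_mul_right hmpos key
      omega
  exact hmain t S hSτ (by omega)

/-- For a t-(v,k,λ) design with no repeated blocks and
a_s ∈ {0,…,λ_s^t} with Σ_s a_s·C(t,s) > λ_1, for every t-subset τ of the
point set (with any bijection f from τ to [t]) one can injectively pick, for
each row (s,i,Y) of the stacked PDA B, a block of the design whose trace on τ
is exactly f⁻¹(Y); i.e., the subarray of the incidence array P on these rows
and the columns τ has its stars exactly where B does. -/
theorem hppda_from_t_design
    (v k t lam : ℕ) (ht : 1 ≤ t) (hkt : t ≤ k) (hvk : k < v)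
    (A : Finset (Finset (Fin v)))
    (hblocks : ∀ b ∈ A, b.card = k)
    (hdes : ∀ T : Finset (Fin v), T.card = t →
      (A.filter (fun b => T ⊆ b)).card = lam)
    (a : ℕ → ℕ)
    (ha : ∀ s ∈ Finset.Icc 1 (t - 1),
      ((a s : ℚ)) ≤ lam * ((v - t).choose (k - s)) / ((v - t).choose (k - t)))
    (hbig : ((∑ s ∈ Finset.Icc 1 (t - 1), a s * t.choose s : ℕ) : ℚ)
      > lam * ((v - 1).choose (t - 1)) / ((k - 1).choose (t - 1))) :
    ∀ τ : Finset (Fin v), τ.card = t →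
      ∀ f : Fin v → Fin t, Set.InjOn f ↑τ →
        ∃ ρ : ℕ × ℕ × Finset (Fin t) → Finset (Fin v),
          Set.InjOn ρ ↑(stackedRows t a) ∧
          (∀ r ∈ stackedRows t a, ρ r ∈ A) ∧
          (∀ r ∈ stackedRows t a, ∀ x ∈ τ, (x ∈ ρ r ↔ f x ∈ r.2.2)) := by
  intro τ hτ f hf
  have hcpos : 0 < (v - t).choose (k - t) := Nat.choose_pos (by omega)
  have himg : τ.image f = Finset.univ := by
    apply Finset.eq_univ_of_card
    rw [Finset.card_image_of_injOn hf, hτ, Fintype.card_fin]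
  set Sof : Finset (Fin t) → Finset (Fin v) :=
    fun Y => τ.filter (fun x => f x ∈ Y) with hSof
  have hSsub : ∀ Y, Sof Y ⊆ τ := fun Y => Finset.filter_subset _ _
  have himgS : ∀ Y, (Sof Y).image f = Y := by
    intro Y
    ext y
    simp only [Finset.mem_image, hSof, Finset.mem_filter]
    constructor
    · rintro ⟨x, ⟨hxτ, hfx⟩, rfl⟩
      exact hfx
    · intro hy
      have : y ∈ τ.image f := himg ▸ Finset.mem_univ y
      obtain ⟨x, hxτ, rfl⟩ := Finset.mem_image.1 this
      exact ⟨x, ⟨hxτ, hy⟩, rfl⟩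
  have hcardS : ∀ Y, (Sof Y).card = Y.card := by
    intro Y
    conv_rhs => rw [← himgS Y]
    exact (Finset.card_image_of_injOn (hf.mono (by
      exact_mod_cast Finset.coe_subset.2 (hSsub Y)))).symm
  have hSinj : ∀ Y Y', Sof Y = Sof Y' → Y = Y' := by
    intro Y Y' h
    rw [← himgS Y, ← himgS Y', h]
  have hcount : ∀ r ∈ stackedRows t a,
      a r.1 ≤ (A.filter (fun b => b ∩ τ = Sof r.2.2)).card := by
    intro r hr
    obtain ⟨⟨hs1, hs2⟩, ⟨hi1, hi2⟩, hY⟩ := mem_stackedRows_aux.1 hr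
    have hE := exact_count v k t lam hkt (le_of_lt hvk) A hblocks hdes τ hτ
      (Sof r.2.2) (hSsub r.2.2)
    rw [hcardS, hY] at hE
    have haq := ha r.1 (Finset.mem_Icc.2 ⟨hs1, hs2⟩)
    have hcast : ((A.filter (fun b => b ∩ τ = Sof r.2.2)).card : ℚ)
        * ((v - t).choose (k - t) : ℚ)
        = (lam : ℚ) * ((v - t).choose (k - r.1) : ℚ) := by exact_mod_cast hE
    have hcne : ((v - t).choose (k - t) : ℚ) ≠ 0 := by
      exact_mod_cast hcpos.ne'
    have : (a r.1 : ℚ) ≤ ((A.filter (fun b => b ∩ τ = Sof r.2.2)).card : ℚ) := by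
      calc (a r.1 : ℚ) ≤ (lam : ℚ) * ((v - t).choose (k - r.1) : ℚ)
            / ((v - t).choose (k - t) : ℚ) := haq
        _ = ((A.filter (fun b => b ∩ τ = Sof r.2.2)).card : ℚ) := by
            rw [← hcast]
            field_simp
    exact_mod_cast this
  have hρfib : ∀ r ∈ stackedRows t a,
      ((A.filter (fun b => b ∩ τ = Sof r.2.2)).toList).getD (r.2.1 - 1) ∅
        ∈ A.filter (fun b => b ∩ τ = Sof r.2.2) := by
    intro r hr
    obtain ⟨⟨hs1, hs2⟩, ⟨hi1, hi2⟩, hY⟩ := mem_stackedRows_aux.1 hr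
    have hlen : r.2.1 - 1 < (A.filter (fun b => b ∩ τ = Sof r.2.2)).toList.length := by
      rw [Finset.length_toList]
      have := hcount r hr
      omega
    rw [List.getD_eq_getElem _ _ hlen]
    exact Finset.mem_toList.1 (List.getElem_mem hlen)
  refine ⟨fun r => ((A.filter (fun b => b ∩ τ = Sof r.2.2)).toList).getD (r.2.1 - 1) ∅,
    ?_, ?_, ?_⟩
  · -- injectivity
    intro r hr r' hr' heq
    simp only [Finset.mem_coe] at hr hr'
    simp only at heq
    have h1 := Finset.mem_filter.1 (hρfib r hr)
    have h2 := Finset.mem_filter.1 (hρfib r' hr')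
    have hYY : r.2.2 = r'.2.2 := by
      apply hSinj
      rw [← h1.2, ← h2.2, heq]
    obtain ⟨⟨hs1, hs2⟩, ⟨hi1, hi2⟩, hY⟩ := mem_stackedRows_aux.1 hr
    obtain ⟨⟨hs1', hs2'⟩, ⟨hi1', hi2'⟩, hY'⟩ := mem_stackedRows_aux.1 hr'
    have hss : r.1 = r'.1 := by rw [← hY, ← hY', hYY]
    have hlen : r.2.1 - 1 < (A.filter (fun b => b ∩ τ = Sof r.2.2)).toList.length := by
      rw [Finset.length_toList]
      have := hcount r hr
      omega
    have hlen' : r'.2.1 - 1 < (A.filter (fun b => b ∩ τ = Sof r'.2.2)).toList.length := by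
      rw [Finset.length_toList]
      have := hcount r' hr'
      omega
    rw [hYY] at heq hlen
    rw [List.getD_eq_getElem _ _ hlen, List.getD_eq_getElem _ _ hlen'] at heq
    have hii : r.2.1 - 1 = r'.2.1 - 1 :=
      ((Finset.nodup_toList _).getElem_inj_iff).1 heq
    have hii' : r.2.1 = r'.2.1 := by omega
    exact Prod.ext hss (Prod.ext hii' hYY)
  · -- membership in A
    intro r hr
    exact (Finset.mem_filter.1 (hρfib r hr)).1
  · -- trace condition
    intro r hr x hx
    have htr := (Finset.mem_filter.1 (hρfib r hr)).2
    simp only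
    constructor
    · intro hxρ
      have hxm : x ∈ Sof r.2.2 := by
        rw [← htr]
        exact Finset.mem_inter.2 ⟨hxρ, hx⟩
      exact (Finset.mem_filter.1 hxm).2
    · intro hfx
      have hxm : x ∈ Sof r.2.2 := Finset.mem_filter.2 ⟨hx, hfx⟩
      rw [← htr] at hxm
      exact (Finset.mem_inter.1 hxm).1
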